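/- A compact Hausdorff semigroup with separately continuous multiplication which is algebraically a group and has jointly continuous multiplication is a topological group (inversion is continuous). -/

import Mathlib

/-- A compact Hausdorff semigroup with separately continuous
multiplication which is algebraically a group and whose multiplication is jointly
continuous is a topological group: inversion is continuous. -/
theorem stmt5 {S : Type*} [TopologicalSpace S] [CompactSpace S] [T2Space S]
    (mul : S → S → S)
    (hsep₁ : ∀ s, Continuous fun t => mul s t)
    (hsep₂ : ∀ s, Continuous fun t => mul t s)
    (hassoc : ∀ a b c, mul (mul a b) c = mul a (mul b c))
    (e : S) (hid : ∀ s, mul e s = s ∧ mul s e = s)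
    (inv : S → S) (hinv : ∀ s, mul s (inv s) = e ∧ mul (inv s) s = e)
    (hjoint : Continuous fun p : S × S => mul p.1 p.2) :
    Continuous inv := by
  -- uniqueness of inverses
  have huniq : ∀ x y, mul x y = e → y = inv x := by
    intro x y h
    calc y = mul e y := ((hid y).1).symm
    _ = mul (mul (inv x) x) y := by rw [(hinv x).2]
    _ = mul (inv x) (mul x y) := hassoc _ _ _
    _ = mul (inv x) e := by rw [h]
    _ = inv x := (hid (inv x)).2
  -- the graph of inv is closed
  set G : Set (S × S) := {p | mul p.1 p.2 = e} with hG
  have hGclosed : IsClosed G := isClosed_singleton.preimage hjoint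
  have : CompactSpace G := isCompact_iff_compactSpace.mp hGclosed.isCompact
  -- continuous bijection G → S via first projection
  let eqv : G ≃ S :=
    { toFun := fun p => p.1.1
      invFun := fun x => ⟨(x, inv x), (hinv x).1⟩
      left_inv := by
        rintro ⟨⟨x, y⟩, hxy⟩
        exact Subtype.ext (Prod.ext rfl (huniq x y hxy).symm)
      right_inv := fun x => rfl }
  have hc : Continuous eqv := (continuous_fst.comp continuous_subtype_val)
  have h := hc.homeoOfEquivCompactToT2 (f := eqv)
  have : Continuous fun x => ((hc.homeoOfEquivCompactToT2 (f := eqv)).symm x : S × S) :=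
    continuous_subtype_val.comp (hc.homeoOfEquivCompactToT2 (f := eqv)).symm.continuous
  have hsnd : Continuous fun x => ((hc.homeoOfEquivCompactToT2 (f := eqv)).symm x : S × S).2 :=
    continuous_snd.comp this
  convert hsnd using 1
  rfl
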